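/- arXiv:1410.4273 — 4 statements merged into one kernel-verified Lean document; each statement's English description precedes it below -/
import Mathlib

section
/- Let λ_1 ≥ ... ≥ λ_n with λ_j < 1 for all j, let λ < λ̂ < λ_n, and suppose (λ̂ − λ)(m − t + Σ_j (1 − λ_j)/(λ_j − λ)) = [Σ_j (1 − λ_j)/((λ_j − λ)(λ_j − λ̂))] / [Σ_j 1/((λ_j − λ)(λ_j − λ̂))] with m − t ≥ 1. Then (λ̂ − λ)·[ (Σ_j (1 − λ_j)/((λ_j − λ)(λ_j − λ̂)²)) / (Σ_j 1/((λ_j − λ)(λ_j − λ̂))) − (λ̂ − λ)·Σ_j (1 − λ_j)/((λ_j − λ)(λ_j − λ̂)) ] > 0. -/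
open Finset

/-- Inequality (3.2) of Lemma 3.1: the root `λ̂` of the balance equation satisfies
a strict positivity inequality. -/
theorem lambda_hat_inequality
    {n : ℕ} (hn : 0 < n) (lam : Fin n → ℝ) (hmono : Antitone lam)
    (hlam : ∀ j, lam j < 1)
    (l lh : ℝ) (hl : l < lh) (hlh : lh < lam ⟨n - 1, by omega⟩)
    (m t : ℕ) (hmt : t < m)
    (hbal : (lh - l) * (((m : ℝ) - t) + ∑ j, (1 - lam j) / (lam j - l)) =
      (∑ j, (1 - lam j) / ((lam j - l) * (lam j - lh))) /
        (∑ j, 1 / ((lam j - l) * (lam j - lh)))) :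
    0 < (lh - l) *
      ((∑ j, (1 - lam j) / ((lam j - l) * (lam j - lh) ^ 2)) /
          (∑ j, 1 / ((lam j - l) * (lam j - lh))) -
        (lh - l) * ∑ j, (1 - lam j) / ((lam j - l) * (lam j - lh))) := by
  have hll : (0:ℝ) < lh - l := sub_pos.2 hl
  have hb : ∀ j, 0 < lam j - lh := by
    intro j
    have hj : j ≤ (⟨n - 1, by omega⟩ : Fin n) := by
      have := j.isLt
      exact Fin.mk_le_mk.mpr (by omega) |>.trans_eq rfl
    have := hmono hj
    linarith [hlh]
  have ha : ∀ j, 0 < lam j - l := fun j => by have := hb j; linarith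
  have hc : ∀ j, 0 < 1 - lam j := fun j => sub_pos.2 (hlam j)
  have hne : (Finset.univ : Finset (Fin n)).Nonempty := ⟨⟨0, hn⟩, Finset.mem_univ _⟩
  set S := ∑ j, 1 / ((lam j - l) * (lam j - lh)) with hSdef
  set U := ∑ j, (1 - lam j) / ((lam j - l) * (lam j - lh)) with hUdef
  set V := ∑ j, (1 - lam j) / ((lam j - l) * (lam j - lh) ^ 2) with hVdef
  set W := ∑ j, (1 - lam j) / (lam j - l) with hWdef
  have hS : 0 < S :=
    Finset.sum_pos (fun j _ => div_pos one_pos (mul_pos (ha j) (hb j))) hne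
  have hV : 0 < V :=
    Finset.sum_pos (fun j _ => div_pos (hc j) (mul_pos (ha j) (pow_pos (hb j) 2))) hne
  have hW : 0 < W :=
    Finset.sum_pos (fun j _ => div_pos (hc j) (ha j)) hne
  -- Cauchy–Schwarz : U ^ 2 ≤ V * W
  have hCS : U ^ 2 ≤ V * W := by
    have key := Finset.sum_mul_sq_le_sq_mul_sq Finset.univ
      (fun j => Real.sqrt ((1 - lam j) / ((lam j - l) * (lam j - lh) ^ 2)))
      (fun j => Real.sqrt ((1 - lam j) / (lam j - l)))
    have e1 : ∀ j : Fin n,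
        Real.sqrt ((1 - lam j) / ((lam j - l) * (lam j - lh) ^ 2)) *
          Real.sqrt ((1 - lam j) / (lam j - l)) =
        (1 - lam j) / ((lam j - l) * (lam j - lh)) := by
      intro j
      rw [← Real.sqrt_mul (div_pos (hc j) (mul_pos (ha j) (pow_pos (hb j) 2))).le]
      have : (1 - lam j) / ((lam j - l) * (lam j - lh) ^ 2) * ((1 - lam j) / (lam j - l)) =
          ((1 - lam j) / ((lam j - l) * (lam j - lh))) ^ 2 := by
        field_simp
      rw [this, Real.sqrt_sq (div_pos (hc j) (mul_pos (ha j) (hb j))).le]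
    have e2 : ∀ j : Fin n,
        Real.sqrt ((1 - lam j) / ((lam j - l) * (lam j - lh) ^ 2)) ^ 2 =
        (1 - lam j) / ((lam j - l) * (lam j - lh) ^ 2) := fun j =>
      Real.sq_sqrt (div_pos (hc j) (mul_pos (ha j) (pow_pos (hb j) 2))).le
    have e3 : ∀ j : Fin n,
        Real.sqrt ((1 - lam j) / (lam j - l)) ^ 2 = (1 - lam j) / (lam j - l) := fun j =>
      Real.sq_sqrt (div_pos (hc j) (ha j)).le
    calc U ^ 2 = (∑ j, Real.sqrt ((1 - lam j) / ((lam j - l) * (lam j - lh) ^ 2)) *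
          Real.sqrt ((1 - lam j) / (lam j - l))) ^ 2 := by
          rw [hUdef]; congr 1; exact Finset.sum_congr rfl fun j _ => (e1 j).symm
      _ ≤ (∑ j, Real.sqrt ((1 - lam j) / ((lam j - l) * (lam j - lh) ^ 2)) ^ 2) *
          ∑ j, Real.sqrt ((1 - lam j) / (lam j - l)) ^ 2 := key
      _ = V * W := by
          rw [hVdef, hWdef]
          congr 1
          · exact Finset.sum_congr rfl fun j _ => e2 j
          · exact Finset.sum_congr rfl fun j _ => e3 j
  have hM : (1:ℝ) ≤ (m:ℝ) - t := by
    have : (t:ℝ) + 1 ≤ m := by exact_mod_cast hmt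
    linarith
  have hMW : 0 < ((m:ℝ) - t) + W := by linarith
  -- from the balance equation: U = (lh - l) * (M + W) * S
  have hU : U = (lh - l) * (((m:ℝ) - t) + W) * S := by
    rw [eq_div_iff hS.ne'] at hbal
    linarith
  -- key: (lh - l) * U * S < V
  have hkey : (lh - l) * U * S < V := by
    have h1 : U ^ 2 = (lh - l) * U * S * (((m:ℝ) - t) + W) := by
      rw [hU]; ring
    have h2 : V * W < V * (((m:ℝ) - t) + W) := by nlinarith
    have h3 : (lh - l) * U * S * (((m:ℝ) - t) + W) < V * (((m:ℝ) - t) + W) := by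
      calc (lh - l) * U * S * (((m:ℝ) - t) + W) = U ^ 2 := h1.symm
        _ ≤ V * W := hCS
        _ < V * (((m:ℝ) - t) + W) := h2
    exact lt_of_mul_lt_mul_right (by linarith) hMW.le
  have : (lh - l) * U < V / S := (lt_div_iff₀ hS).mpr hkey
  exact mul_pos hll (by linarith)
end

section
/- Let m, ℓ, n be positive reals with m ≥ ℓ > n. Define F(T̂) = ℓ(1 − n/T̂)/(m − (ℓ−1)/2 + T̂ − n) − n/T̂ on T̂ ∈ (n, ∞). Then F attains its global maximum on (n, ∞) at T̂* = [n(m + (ℓ+1)/2 − n) + √(n ℓ (m − (ℓ−1)/2)(m + (ℓ+1)/2 − n))]/(ℓ − n). -/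
private lemma F_aux1 (ℓ m n x : ℝ) (hx : x ≠ 0) (hd : x + (m - (ℓ - 1) / 2 - n) ≠ 0) :
    ℓ * (1 - n / x) / (m - (ℓ - 1) / 2 + x - n) - n / x
      = ((ℓ - n) * x - n * (m + (ℓ + 1) / 2 - n)) / (x * (x + (m - (ℓ - 1) / 2 - n))) := by
  have h1 : m - (ℓ - 1) / 2 + x - n = x + (m - (ℓ - 1) / 2 - n) := by ring
  rw [h1, div_sub_div _ _ hd hx, div_eq_div_iff (mul_ne_zero hd hx) (mul_ne_zero hx hd)]
  field_simp
  ring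

private lemma F_aux2 (c A D n t T : ℝ) (hn : 0 < n) (hDn : 0 < D + n) (htn : n < t)
    (hTn : n < T) (key : c * t ^ 2 = 2 * n * A * t + n * A * D) (hct : n * A ≤ c * t) :
    (c * T - n * A) / (T * (T + D)) ≤ (c * t - n * A) / (t * (t + D)) := by
  have hT0 : 0 < T := hn.trans hTn
  have ht0 : 0 < t := hn.trans htn
  have hTD : 0 < T + D := by linarith
  have htD : 0 < t + D := by linarith
  rw [div_le_div_iff₀ (by positivity) (by positivity)]
  have diff : (c * t - n * A) * (T * (T + D)) - (c * T - n * A) * (t * (t + D))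
      = (T - t) ^ 2 * (c * t - n * A) := by linear_combination (T - t) * key
  nlinarith [mul_nonneg (sq_nonneg (T - t)) (sub_nonneg.2 hct), diff]

/-- Lemma 3.5: `F(T̂)` attains its global maximum on `(n, ∞)` at `T̂*`. -/
theorem F_isMaxOn
    (m ℓ n : ℝ) (hml : ℓ ≤ m) (hln : n < ℓ) (hn : 0 < n) :
    (n * (m + (ℓ + 1) / 2 - n) +
        Real.sqrt (n * ℓ * (m - (ℓ - 1) / 2) * (m + (ℓ + 1) / 2 - n))) / (ℓ - n) ∈
      Set.Ioi n ∧
    IsMaxOn (fun Th => ℓ * (1 - n / Th) / (m - (ℓ - 1) / 2 + Th - n) - n / Th)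
      (Set.Ioi n)
      ((n * (m + (ℓ + 1) / 2 - n) +
        Real.sqrt (n * ℓ * (m - (ℓ - 1) / 2) * (m + (ℓ + 1) / 2 - n))) / (ℓ - n)) := by
  have hc0 : (0:ℝ) < ℓ - n := by linarith
  have hA0 : (0:ℝ) < m + (ℓ + 1) / 2 - n := by linarith
  have hD0 : (0:ℝ) < m - (ℓ - 1) / 2 := by linarith
  have hDn : (0:ℝ) < (m - (ℓ - 1) / 2 - n) + n := by linarith
  set s := Real.sqrt (n * ℓ * (m - (ℓ - 1) / 2) * (m + (ℓ + 1) / 2 - n)) with hsdef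
  have hs0 : 0 ≤ s := Real.sqrt_nonneg _
  have hs2 : s ^ 2 = n * ℓ * (m - (ℓ - 1) / 2) * (m + (ℓ + 1) / 2 - n) := by
    rw [hsdef]
    exact Real.sq_sqrt
      (le_of_lt (mul_pos (mul_pos (mul_pos hn (hn.trans hln)) hD0) hA0))
  set t := (n * (m + (ℓ + 1) / 2 - n) + s) / (ℓ - n) with ht
  have hct' : (ℓ - n) * t = n * (m + (ℓ + 1) / 2 - n) + s := by
    rw [ht]; field_simp
  have htn : n < t := by
    rw [ht, lt_div_iff₀ hc0]
    nlinarith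
  have key : (ℓ - n) * t ^ 2
      = 2 * n * (m + (ℓ + 1) / 2 - n) * t
        + n * (m + (ℓ + 1) / 2 - n) * (m - (ℓ - 1) / 2 - n) := by
    apply mul_left_cancel₀ (show (ℓ - n) ≠ 0 from ne_of_gt hc0)
    calc (ℓ - n) * ((ℓ - n) * t ^ 2) = ((ℓ - n) * t) ^ 2 := by ring
      _ = (n * (m + (ℓ + 1) / 2 - n) + s) ^ 2 := by rw [hct']
      _ = 2 * n * (m + (ℓ + 1) / 2 - n) * ((ℓ - n) * t)
            + (ℓ - n) * (n * (m + (ℓ + 1) / 2 - n) * (m - (ℓ - 1) / 2 - n)) := by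
          rw [hct']; linear_combination hs2
      _ = (ℓ - n) * (2 * n * (m + (ℓ + 1) / 2 - n) * t
            + n * (m + (ℓ + 1) / 2 - n) * (m - (ℓ - 1) / 2 - n)) := by ring
  have hct : n * (m + (ℓ + 1) / 2 - n) ≤ (ℓ - n) * t := by
    rw [hct']; linarith
  refine ⟨htn, ?_⟩
  rw [isMaxOn_iff]
  intro T hT
  have hTn : n < T := hT
  have hT0 : 0 < T := hn.trans hTn
  have ht0 : 0 < t := hn.trans htn
  show ℓ * (1 - n / T) / (m - (ℓ - 1) / 2 + T - n) - n / T
      ≤ ℓ * (1 - n / t) / (m - (ℓ - 1) / 2 + t - n) - n / t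
  rw [F_aux1 ℓ m n T (ne_of_gt hT0) (by nlinarith),
      F_aux1 ℓ m n t (ne_of_gt ht0) (by nlinarith)]
  exact F_aux2 (ℓ - n) (m + (ℓ + 1) / 2 - n) (m - (ℓ - 1) / 2 - n) n t T hn hDn htn hTn key hct
end

section
/- Let V₁ᵀ ∈ ℝ^{n×m} and a column selection giving V₁ᵀΠ whose chosen submatrix V₁ ∈ ℝ^{n×ℓ} has CS decomposition V₁ = P₁(C 0)Q₁ᵀ as a block of an m×m orthogonal matrix, with nonnegative diagonal C satisfying C² + S² = I. Suppose there exist nonnegative weights s_i, at most ℓ nonzero and supported on the selected columns, such that λ_min(Σᵢ sᵢ vᵢ¹(vᵢ¹)ᵀ) ≥ (1 − √(n/ℓ))² and λ_max(Σᵢ sᵢ vᵢ²(vᵢ²)ᵀ) ≤ (1 + √((m−n)/ℓ))². Then σ_min²(V₁) ≥ (√ℓ − √n)² / [ (√ℓ + √(m−n))² + (√ℓ − √n)² ]. -/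
open Matrix Finset

private lemma sum_mul_sum_comm' {ι κ : Type*} [Fintype κ] (s : Finset ι) (f : ι → ℝ)
    (g : ι → κ → ℝ) :
    ∑ i ∈ s, f i * ∑ j, g i j = ∑ j, ∑ i ∈ s, f i * g i j := by
  simp_rw [Finset.mul_sum]; exact Finset.sum_comm

private lemma dot_vecMulVec_mulVec {p : ℕ} (v x : Fin p → ℝ) :
    x ⬝ᵥ (vecMulVec v v *ᵥ x) = (∑ k, v k * x k) ^ 2 := by
  simp only [dotProduct, mulVec, vecMulVec_apply, pow_two]
  calc ∑ j, x j * ∑ k, v j * v k * x k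
      = ∑ j, (v j * x j) * ∑ k, v k * x k := by
        refine Finset.sum_congr rfl fun j _ => ?_
        rw [Finset.mul_sum, Finset.mul_sum]
        exact Finset.sum_congr rfl fun k _ => by ring
    _ = (∑ j, v j * x j) * ∑ k, v k * x k := by rw [Finset.sum_mul]

private lemma dot_weighted_sum {m p : ℕ} (T : Finset (Fin m)) (w : Fin m → ℝ)
    (F : Fin m → Fin p → ℝ) (x : Fin p → ℝ) :
    x ⬝ᵥ ((∑ i ∈ T, w i • vecMulVec (F i) (F i)) *ᵥ x)
      = ∑ i ∈ T, w i * (∑ k, F i k * x k) ^ 2 := by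
  classical
  induction T using Finset.induction with
  | empty => simp
  | insert _ _ h ih =>
    rw [Finset.sum_insert h, Finset.sum_insert h, add_mulVec, dotProduct_add,
      smul_mulVec, dotProduct_smul, dot_vecMulVec_mulVec, ih, smul_eq_mul]

private lemma sum_vecMulVec_mulVec_apply {m p : ℕ} (T : Finset (Fin m))
    (F : Fin m → Fin p → ℝ) (x : Fin p → ℝ) (j : Fin p) :
    ((∑ i ∈ T, vecMulVec (F i) (F i)) *ᵥ x) j = ∑ i ∈ T, (∑ k, F i k * x k) * F i j := by
  classical
  induction T using Finset.induction with
  | empty => simp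
  | insert _ _ h ih =>
    rw [Finset.sum_insert h, Finset.sum_insert h, add_mulVec, Pi.add_apply, ih]
    congr 1
    simp only [mulVec, dotProduct, vecMulVec_apply]
    rw [Finset.sum_mul]
    exact Finset.sum_congr rfl fun k _ => by ring

private lemma ddsss_aux {m n p : ℕ} (a : Fin m → Fin n → ℝ) (b : Fin m → Fin p → ℝ)
    (orth : ∀ i i' : Fin m,
      ((∑ j, a i j * a i' j) + ∑ j, b i j * b i' j) = if i = i' then (1 : ℝ) else 0)
    (S : Finset (Fin m)) (s : Fin m → ℝ) (hs : ∀ i, 0 ≤ s i) (hsupp : ∀ i ∉ S, s i = 0)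
    (α β : ℝ) (hα : 0 < α) (hβ : 0 < β)
    (hlow : ((∑ i, s i • vecMulVec (a i) (a i)) -
        α • (1 : Matrix (Fin n) (Fin n) ℝ)).PosSemidef)
    (hup : (β • (1 : Matrix (Fin p) (Fin p) ℝ) -
        ∑ i, s i • vecMulVec (b i) (b i)).PosSemidef) :
    ((∑ i ∈ S, vecMulVec (a i) (a i)) -
      (α / (α + β)) • (1 : Matrix (Fin n) (Fin n) ℝ)).PosSemidef := by
  classical
  set M : Matrix (Fin n) (Fin n) ℝ := ∑ i ∈ S, vecMulVec (a i) (a i) with hMdef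
  have hM : M.IsHermitian := by
    show Mᴴ = M
    ext j k
    simp [hMdef, conjTranspose_apply, Matrix.sum_apply, vecMulVec_apply, mul_comm]
  set c : ℝ := α / (α + β) with hcdef
  have key : ∀ idx, c ≤ hM.eigenvalues idx := by
    intro idx
    set lam := hM.eigenvalues idx with hlamdef
    set u : Fin n → ℝ := ⇑(hM.eigenvectorBasis idx) with hudef
    have hMu : M *ᵥ u = lam • u := hM.mulVec_eigenvectorBasis idx
    have hunorm : ∑ j, u j * u j = 1 := by
      have h1 : ‖hM.eigenvectorBasis idx‖ = 1 := hM.eigenvectorBasis.orthonormal.1 idx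
      have h2 : (inner ℝ (hM.eigenvectorBasis idx) (hM.eigenvectorBasis idx) : ℝ) = 1 := by
        rw [real_inner_self_eq_norm_mul_norm, h1]; ring
      simp only [PiLp.inner_apply, RCLike.inner_apply, conj_trivial] at h2
      exact h2
    set t : Fin m → ℝ := fun i => ∑ j, a i j * u j with htdef
    have hMu' : ∀ j, ∑ i ∈ S, t i * a i j = lam * u j := by
      intro j
      have h1 := congrFun hMu j
      rw [sum_vecMulVec_mulVec_apply S a u j] at h1
      simpa using h1
    have hT : ∑ i ∈ S, t i * t i = lam := by
      calc ∑ i ∈ S, t i * t i = ∑ j, ∑ i ∈ S, t i * (a i j * u j) := by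
            rw [← sum_mul_sum_comm' S t fun i j => a i j * u j]
        _ = ∑ j, (lam * u j) * u j := by
            refine Finset.sum_congr rfl fun j _ => ?_
            rw [← hMu' j, Finset.sum_mul]
            exact Finset.sum_congr rfl fun i _ => by ring
        _ = lam * ∑ j, u j * u j := by
            rw [Finset.mul_sum]; exact Finset.sum_congr rfl fun j _ => by ring
        _ = lam := by rw [hunorm, mul_one]
    set y : Fin p → ℝ := fun k => ∑ i ∈ S, t i * b i k with hydef
    have hby : ∀ i0 ∈ S, ∑ k, b i0 k * y k = (1 - lam) * t i0 := by
      intro i0 hi0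
      have step1 : ∑ k, b i0 k * y k = ∑ i ∈ S, t i * ∑ k, b i0 k * b i k := by
        rw [sum_mul_sum_comm' S t fun i k => b i0 k * b i k]
        refine Finset.sum_congr rfl fun k _ => ?_
        rw [show y k = ∑ i ∈ S, t i * b i k from rfl, Finset.mul_sum]
        exact Finset.sum_congr rfl fun i _ => by ring
      have step2 : ∀ i, ∑ k, b i0 k * b i k
          = (if i0 = i then (1:ℝ) else 0) - ∑ j, a i0 j * a i j := by
        intro i
        have := orth i0 i
        linarith [this]
      have step4 : ∑ i ∈ S, t i * ∑ j, a i0 j * a i j = lam * t i0 := by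
        rw [sum_mul_sum_comm' S t fun i j => a i0 j * a i j]
        calc ∑ j, ∑ i ∈ S, t i * (a i0 j * a i j)
            = ∑ j, a i0 j * ∑ i ∈ S, t i * a i j := by
              refine Finset.sum_congr rfl fun j _ => ?_
              rw [Finset.mul_sum]
              exact Finset.sum_congr rfl fun i _ => by ring
          _ = ∑ j, a i0 j * (lam * u j) :=
              Finset.sum_congr rfl fun j _ => by rw [hMu' j]
          _ = lam * ∑ j, a i0 j * u j := by
              rw [Finset.mul_sum]; exact Finset.sum_congr rfl fun j _ => by ring
          _ = lam * t i0 := rfl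
      calc ∑ k, b i0 k * y k
          = ∑ i ∈ S, t i * ((if i0 = i then (1:ℝ) else 0) - ∑ j, a i0 j * a i j) := by
            rw [step1]
            exact Finset.sum_congr rfl fun i _ => by rw [step2 i]
        _ = (∑ i ∈ S, t i * (if i0 = i then (1:ℝ) else 0))
              - ∑ i ∈ S, t i * ∑ j, a i0 j * a i j := by
            rw [← Finset.sum_sub_distrib]
            exact Finset.sum_congr rfl fun i _ => by ring
        _ = t i0 - lam * t i0 := by
            rw [step4]
            congr 1
            simp [mul_ite, Finset.sum_ite_eq, hi0]
        _ = (1 - lam) * t i0 := by ring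
    have hyy : ∑ k, y k * y k = (1 - lam) * lam := by
      calc ∑ k, y k * y k = ∑ i ∈ S, t i * ∑ k, b i k * y k := by
            rw [sum_mul_sum_comm' S t fun i k => b i k * y k]
            refine Finset.sum_congr rfl fun k _ => ?_
            conv_lhs => rw [show y k = ∑ i ∈ S, t i * b i k from rfl]
            rw [Finset.sum_mul]
            exact Finset.sum_congr rfl fun i _ => by ring
        _ = ∑ i ∈ S, t i * ((1 - lam) * t i) :=
            Finset.sum_congr rfl fun i hi => by rw [hby i hi]
        _ = (1 - lam) * ∑ i ∈ S, t i * t i := by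
            rw [Finset.mul_sum]; exact Finset.sum_congr rfl fun i _ => by ring
        _ = (1 - lam) * lam := by rw [hT]
    have hQ : α ≤ ∑ i ∈ S, s i * (t i) ^ 2 := by
      have h0 := hlow.dotProduct_mulVec_nonneg u
      rw [star_trivial, sub_mulVec, dotProduct_sub, dot_weighted_sum Finset.univ s a u,
        smul_mulVec, one_mulVec, dotProduct_smul] at h0
      have hdot : u ⬝ᵥ u = 1 := hunorm
      rw [hdot, smul_eq_mul, mul_one] at h0
      have hrestrict : ∑ i, s i * (∑ k, a i k * u k) ^ 2 = ∑ i ∈ S, s i * (t i) ^ 2 := by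
        symm
        apply Finset.sum_subset (Finset.subset_univ S)
        intro i _ hi
        rw [hsupp i hi, zero_mul]
      rw [hrestrict] at h0
      linarith
    have hY : (1 - lam) ^ 2 * ∑ i ∈ S, s i * (t i) ^ 2 ≤ β * ((1 - lam) * lam) := by
      have h0 := hup.dotProduct_mulVec_nonneg y
      rw [star_trivial, sub_mulVec, dotProduct_sub, dot_weighted_sum Finset.univ s b y,
        smul_mulVec, one_mulVec, dotProduct_smul] at h0
      have hdot : y ⬝ᵥ y = (1 - lam) * lam := hyy
      rw [hdot, smul_eq_mul] at h0
      have hrestrict : ∑ i, s i * (∑ k, b i k * y k) ^ 2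
          = ∑ i ∈ S, s i * ((1 - lam) * t i) ^ 2 := by
        rw [← Finset.sum_subset (Finset.subset_univ S)
          (fun i _ hi => by rw [hsupp i hi, zero_mul])]
        exact Finset.sum_congr rfl fun i hi => by rw [hby i hi]
      rw [hrestrict] at h0
      have hexp : ∑ i ∈ S, s i * ((1 - lam) * t i) ^ 2
          = (1 - lam) ^ 2 * ∑ i ∈ S, s i * (t i) ^ 2 := by
        rw [Finset.mul_sum]; exact Finset.sum_congr rfl fun i _ => by ring
      rw [hexp] at h0
      linarith
    have hlam0 : 0 ≤ lam := by
      rw [← hT]; exact Finset.sum_nonneg fun i _ => mul_self_nonneg _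
    have hy0 : 0 ≤ (1 - lam) * lam := by
      rw [← hyy]; exact Finset.sum_nonneg fun k _ => mul_self_nonneg _
    have hlam1 : lam ≤ 1 := by nlinarith [hy0, hlam0]
    rcases lt_or_ge lam 1 with hl1 | hl1
    · have h3 : 0 < 1 - lam := by linarith
      have h2 : (1 - lam) * (∑ i ∈ S, s i * (t i) ^ 2) ≤ β * lam := by
        nlinarith [hY, h3]
      have h4 : (1 - lam) * α ≤ β * lam :=
        le_trans (mul_le_mul_of_nonneg_left hQ h3.le) h2
      rw [hcdef, div_le_iff₀ (by linarith : (0:ℝ) < α + β)]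
      nlinarith [h4]
    · have hc1 : c ≤ 1 := by
        rw [hcdef, div_le_one (by linarith : (0:ℝ) < α + β)]
        linarith
      linarith
  set U : Matrix (Fin n) (Fin n) ℝ := ↑hM.eigenvectorUnitary with hUdef
  have hUU : U * Uᴴ = 1 := by
    have h := (Matrix.mem_unitaryGroup_iff).mp hM.eigenvectorUnitary.2
    simpa [Matrix.star_eq_conjTranspose] using h
  have hspec : M = U * diagonal hM.eigenvalues * Uᴴ := by
    have h1 := hM.spectral_theorem
    simpa [Matrix.star_eq_conjTranspose, Function.comp] using h1
  have h3 : U * ((c : ℝ) • (1 : Matrix (Fin n) (Fin n) ℝ)) * Uᴴ = c • 1 := by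
    rw [Matrix.mul_smul, Matrix.smul_mul, mul_one, hUU]
  have hdecomp : M - c • 1 = U * diagonal (fun i => hM.eigenvalues i - c) * Uᴴ := by
    have h2 : diagonal (fun i => hM.eigenvalues i - c)
        = diagonal hM.eigenvalues - diagonal (fun _ => c) := by
      rw [diagonal_sub]
    rw [h2, Matrix.mul_sub, Matrix.sub_mul, ← hspec]
    congr 1
    rw [← Matrix.smul_one_eq_diagonal, h3]
  rw [hdecomp]
  exact (Matrix.posSemidef_diagonal_iff.mpr fun i =>
    sub_nonneg.mpr (key i)).mul_mul_conjTranspose_same U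

/-- Theorem 4.1: if dual-set weights exist with the lower bound
`λ_min(Σᵢ sᵢ vᵢ¹(vᵢ¹)ᵀ) ≥ (1-√(n/ℓ))²` and the upper bound
`λ_max(Σᵢ sᵢ vᵢ²(vᵢ²)ᵀ) ≤ (1+√((m-n)/ℓ))²`, then the selected `n×ℓ` submatrix `V₁`
of `V₁ᵀ` satisfies
`σ_min²(V₁) ≥ (√ℓ-√n)²/((√ℓ+√(m-n))² + (√ℓ-√n)²)`, expressed as positive
semidefiniteness of `V₁V₁ᵀ - c·I = Σ_{i∈S} vᵢ¹(vᵢ¹)ᵀ - c·I`. -/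
theorem ddsss_sigma_min_bound
    {m n ℓ : ℕ} (hnm : n ≤ m) (hnl : n < ℓ) (hlm : ℓ ≤ m)
    (W : Matrix (Fin m) (Fin m) ℝ) (hW : Wᵀ * W = 1)
    (S : Finset (Fin m)) (hS : S.card = ℓ)
    (s : Fin m → ℝ) (hs : ∀ i, 0 ≤ s i) (hsupp : ∀ i ∉ S, s i = 0)
    (hlow : ((∑ i, s i • vecMulVec (fun j : Fin n => W (Fin.castLE hnm j) i)
          (fun j : Fin n => W (Fin.castLE hnm j) i)) -
        ((1 - Real.sqrt ((n : ℝ) / ℓ)) ^ 2) •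
          (1 : Matrix (Fin n) (Fin n) ℝ)).PosSemidef)
    (hup : (((1 + Real.sqrt (((m : ℝ) - n) / ℓ)) ^ 2) •
          (1 : Matrix (Fin (m - n)) (Fin (m - n)) ℝ) -
        ∑ i, s i • vecMulVec (fun j : Fin (m - n) => W ⟨n + (j : ℕ), by omega⟩ i)
          (fun j : Fin (m - n) => W ⟨n + (j : ℕ), by omega⟩ i)).PosSemidef) :
    ((∑ i ∈ S, vecMulVec (fun j : Fin n => W (Fin.castLE hnm j) i)
        (fun j : Fin n => W (Fin.castLE hnm j) i)) -
      ((Real.sqrt ℓ - Real.sqrt n) ^ 2 /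
          ((Real.sqrt ℓ + Real.sqrt ((m : ℝ) - n)) ^ 2 +
            (Real.sqrt ℓ - Real.sqrt n) ^ 2)) •
        (1 : Matrix (Fin n) (Fin n) ℝ)).PosSemidef := by
  have hl0 : (0:ℝ) < ℓ := by
    have : 0 < ℓ := lt_of_le_of_lt (Nat.zero_le n) hnl
    exact_mod_cast this
  have hmn0 : (0:ℝ) ≤ (m:ℝ) - n := by
    have : (n:ℝ) ≤ m := by exact_mod_cast hnm
    linarith
  -- orthonormality of the columns of W, split into top and bottom blocks
  have orth : ∀ i i' : Fin m,
      ((∑ j : Fin n, W (Fin.castLE hnm j) i * W (Fin.castLE hnm j) i') +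
        ∑ j : Fin (m - n), W ⟨n + (j:ℕ), by omega⟩ i * W ⟨n + (j:ℕ), by omega⟩ i')
      = if i = i' then (1:ℝ) else 0 := by
    intro i i'
    have h1 : (Wᵀ * W) i i' = (1 : Matrix (Fin m) (Fin m) ℝ) i i' := by rw [hW]
    rw [Matrix.mul_apply, Matrix.one_apply] at h1
    have hmn : n + (m - n) = m := by omega
    rw [← Equiv.sum_comp (finCongr hmn) (fun k => Wᵀ i k * W k i'),
      Fin.sum_univ_add] at h1
    rw [← h1]
    congr 1
  have hα : (0:ℝ) < (1 - Real.sqrt ((n : ℝ) / ℓ)) ^ 2 := by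
    have h1 : (n:ℝ)/ℓ < 1 := by
      rw [div_lt_one hl0]; exact_mod_cast hnl
    have h2 : Real.sqrt ((n:ℝ)/ℓ) < 1 := by
      calc Real.sqrt ((n:ℝ)/ℓ) < Real.sqrt 1 := Real.sqrt_lt_sqrt (by positivity) h1
        _ = 1 := Real.sqrt_one
    have : (0:ℝ) < 1 - Real.sqrt ((n:ℝ)/ℓ) := by linarith
    positivity
  have hβ : (0:ℝ) < (1 + Real.sqrt (((m : ℝ) - n) / ℓ)) ^ 2 := by positivity
  -- identify the constant
  have hc : (Real.sqrt ℓ - Real.sqrt n) ^ 2 /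
      ((Real.sqrt ℓ + Real.sqrt ((m : ℝ) - n)) ^ 2 + (Real.sqrt ℓ - Real.sqrt n) ^ 2)
      = (1 - Real.sqrt ((n : ℝ) / ℓ)) ^ 2 /
        ((1 - Real.sqrt ((n : ℝ) / ℓ)) ^ 2 + (1 + Real.sqrt (((m : ℝ) - n) / ℓ)) ^ 2) := by
    have hsl : (0:ℝ) < Real.sqrt ℓ := Real.sqrt_pos.mpr hl0
    have e1 : Real.sqrt ((n:ℝ)/ℓ) = Real.sqrt n / Real.sqrt ℓ := by
      rw [Real.sqrt_div (by positivity)]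
    have e2 : Real.sqrt (((m:ℝ)-n)/ℓ) = Real.sqrt ((m:ℝ)-n) / Real.sqrt ℓ := by
      rw [Real.sqrt_div hmn0]
    have e3 : (1 - Real.sqrt ((n:ℝ)/ℓ)) ^ 2
        = (Real.sqrt ℓ - Real.sqrt n) ^ 2 / ℓ := by
      rw [e1]
      rw [show (1:ℝ) - Real.sqrt n / Real.sqrt ℓ
        = (Real.sqrt ℓ - Real.sqrt n) / Real.sqrt ℓ by field_simp]
      rw [div_pow, Real.sq_sqrt hl0.le]
    have e4 : (1 + Real.sqrt (((m:ℝ)-n)/ℓ)) ^ 2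
        = (Real.sqrt ℓ + Real.sqrt ((m:ℝ)-n)) ^ 2 / ℓ := by
      rw [e2]
      rw [show (1:ℝ) + Real.sqrt ((m:ℝ)-n) / Real.sqrt ℓ
        = (Real.sqrt ℓ + Real.sqrt ((m:ℝ)-n)) / Real.sqrt ℓ by field_simp]
      rw [div_pow, Real.sq_sqrt hl0.le]
    rw [e3, e4]
    have hBpos : (0:ℝ) < (Real.sqrt ℓ + Real.sqrt ((m:ℝ)-n)) ^ 2 := by positivity
    have hApos : (0:ℝ) ≤ (Real.sqrt ℓ - Real.sqrt n) ^ 2 := sq_nonneg _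
    have hd1 : ((Real.sqrt ℓ + Real.sqrt ((m:ℝ)-n))^2 + (Real.sqrt ℓ - Real.sqrt n)^2) ≠ 0 := by
      positivity
    have hd2 : ((Real.sqrt ℓ - Real.sqrt n)^2 / (ℓ:ℝ) + (Real.sqrt ℓ + Real.sqrt ((m:ℝ)-n))^2 / ℓ) ≠ 0 := by
      rw [← add_div]
      positivity
    field_simp
    ring
  rw [hc]
  exact ddsss_aux (fun i j => W (Fin.castLE hnm j) i)
    (fun i j => W ⟨n + (j:ℕ), by omega⟩ i) orth S s hs hsupp _ _ hα hβ hlow hup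
end

section
/- Let λ ≤ λ̂ < λ_n ≤ λ_j ≤ 1 for j = 1,...,n with T = Σ_j 1/(λ_j − λ). If λ̂ satisfies (λ̂ − λ)(m − t + (1−λ)T − n) = 1 − λ − [Σ_j 1/(λ_j − λ̂)] / [Σ_j 1/((λ_j − λ)(λ_j − λ̂))], then λ̂ − λ ≥ (1 − λ − n/T)/(m − t + (1−λ)T − n). -/
open Finset

/-- Step inequality in Lemma 3.3: the balance equation implies
`λ̂ - λ ≥ (1 - λ - n/T)/(m - t + (1-λ)T - n)`. -/
theorem lambda_hat_step_lower_bound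
    {n : ℕ} (hn : 0 < n) (lam : Fin n → ℝ) (lamn : ℝ)
    (hmin : ∀ j, lamn ≤ lam j) (hle1 : ∀ j, lam j ≤ 1)
    (l lh T : ℝ) (hllh : l ≤ lh) (hlh : lh < lamn)
    (hT : T = ∑ j, 1 / (lam j - l))
    (m t : ℕ)
    (hpos : 0 < (m : ℝ) - t + (1 - l) * T - n)
    (heq : (lh - l) * ((m : ℝ) - t + (1 - l) * T - n) =
      1 - l - (∑ j, 1 / (lam j - lh)) /
        (∑ j, 1 / ((lam j - l) * (lam j - lh)))) :
    lh - l ≥ (1 - l - (n : ℝ) / T) / ((m : ℝ) - t + (1 - l) * T - n) := by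
  have hlampos : ∀ j, 0 < lam j - l := fun j => by
    have := hmin j; linarith
  have hlamhpos : ∀ j, 0 < lam j - lh := fun j => by
    have := hmin j; linarith
  set D := (m : ℝ) - t + (1 - l) * T - n with hD
  set S := ∑ j, 1 / (lam j - lh) with hS
  set Sg := ∑ j, 1 / ((lam j - l) * (lam j - lh)) with hSg
  have hne : (univ : Finset (Fin n)).Nonempty := univ_nonempty_iff.2 ⟨⟨0, hn⟩⟩
  have hTpos : 0 < T := hT ▸ sum_pos (fun j _ => one_div_pos.2 (hlampos j)) hne
  have hSpos : 0 < S := sum_pos (fun j _ => one_div_pos.2 (hlamhpos j)) hne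
  have hSgpos : 0 < Sg := sum_pos (fun j _ => one_div_pos.2 (mul_pos (hlampos j) (hlamhpos j))) hne
  -- Chebyshev: S * T ≤ n * Sg
  have hmono : Monovary (fun j => 1 / (lam j - l)) (fun j => 1 / (lam j - lh)) := by
    intro i j h
    simp only at h ⊢
    have hij : lam j - lh < lam i - lh := by
      by_contra hc
      push_neg at hc
      exact absurd (one_div_le_one_div_of_le (hlamhpos i) hc) (not_le.2 h)
    have : lam j - l ≤ lam i - l := by linarith
    exact one_div_le_one_div_of_le (hlampos j) this
  have hcheb : S * T ≤ (n : ℝ) * Sg := by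
    have := hmono.symm.sum_mul_sum_le_card_mul_sum
    simp only [Fintype.card_fin] at this
    calc S * T = (∑ j, 1 / (lam j - lh)) * ∑ j, 1 / (lam j - l) := by rw [hT, hS]
    _ ≤ (n : ℝ) * ∑ j, (1 / (lam j - lh)) * (1 / (lam j - l)) := this
    _ = (n : ℝ) * Sg := by
        rw [hSg]; congr 1; apply sum_congr rfl; intro j _
        rw [one_div_mul_one_div, mul_comm]
  have hfrac : S / Sg ≤ (n : ℝ) / T := by
    rw [div_le_div_iff₀ hSgpos hTpos]; linarith
  have h1 : 1 - l - (n : ℝ) / T ≤ (lh - l) * D := by rw [heq]; linarith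
  calc (1 - l - (n : ℝ) / T) / D ≤ ((lh - l) * D) / D := by gcongr
  _ = lh - l := by field_simp
end
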